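/- Let $\Gamma$ be a nontrivial linearly ordered abelian group equipped with an order-preserving automorphism $\gamma \mapsto \rho\cdot\gamma$ such that $\rho\cdot\gamma > n\gamma$ for all $n \in \mathbb{N}$ and all $\gamma > 0$ (the contractive case). Then for every linear difference operator $L(\gamma) = \sum_{i=0}^{n} a_i \rho^i\cdot\gamma$ with $a_i \in \mathbb{Z}$ and $a_n \neq 0$, and every $\gamma > 0$: $L(\gamma) > 0$ if and only if $a_n > 0$. -/

import Mathlib

/-- In a nontrivial ordered abelian group with a contractive
order-preserving automorphism `ρ` (i.e. `ρ γ > n γ` for all `n ∈ ℕ`, `γ > 0`), a linear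
difference operator `L(γ) = ∑ a_i ρ^i γ` with `a_n ≠ 0` satisfies, for every `γ > 0`:
`L(γ) > 0 ↔ a_n > 0`. -/
theorem stmt9 (Γ : Type*) [AddCommGroup Γ] [LinearOrder Γ] [IsOrderedAddMonoid Γ]
    (hΓ : ∃ γ : Γ, γ ≠ 0)
    (ρ : Γ ≃o Γ) (hρadd : ∀ a b : Γ, ρ (a + b) = ρ a + ρ b)
    (hcontr : ∀ (n : ℕ) (γ : Γ), 0 < γ → n • γ < ρ γ) :
    ∀ (n : ℕ) (a : Fin (n + 1) → ℤ), a (Fin.last n) ≠ 0 →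
      ∀ γ : Γ, 0 < γ →
        (0 < ∑ i : Fin (n + 1), a i • (⇑ρ)^[(i : ℕ)] γ ↔ 0 < a (Fin.last n)) := by
  have hρ0 : ρ 0 = 0 := by
    have h := hρadd 0 0
    simp only [add_zero] at h
    exact left_eq_add.mp h
  have hρpos : ∀ γ : Γ, 0 < γ → 0 < ρ γ := fun γ hγ => by
    have := ρ.strictMono hγ; rwa [hρ0] at this
  have hpos : ∀ (k : ℕ) (γ : Γ), 0 < γ → 0 < (⇑ρ)^[k] γ := by
    intro k
    induction k with
    | zero => simpa using fun γ h => h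
    | succ k ih =>
      intro γ hγ
      rw [Function.iterate_succ_apply']
      exact hρpos _ (ih γ hγ)
  have hself : ∀ (k : ℕ) (δ : Γ), 0 < δ → δ ≤ (⇑ρ)^[k] δ := by
    intro k
    induction k with
    | zero => simp
    | succ k ih =>
      intro δ hδ
      rw [Function.iterate_succ_apply']
      refine (ih δ hδ).trans (le_of_lt ?_)
      have := hcontr 1 _ (hpos k δ hδ)
      simpa using this
  have hmono : ∀ (i j : ℕ), i ≤ j → ∀ γ : Γ, 0 < γ →
      (⇑ρ)^[i] γ ≤ (⇑ρ)^[j] γ := by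
    intro i j hij γ hγ
    obtain ⟨k, rfl⟩ : ∃ k, j = k + i := ⟨j - i, by omega⟩
    rw [Function.iterate_add_apply]
    exact hself k _ (hpos i γ hγ)
  -- key bound
  have key : ∀ (m : ℕ) (c : Fin m → ℤ) (γ : Γ), 0 < γ →
      ∑ i : Fin m, c i • (⇑ρ)^[(i : ℕ)] γ < (⇑ρ)^[m] γ := by
    intro m c γ hγ
    cases m with
    | zero => simpa using hγ
    | succ m =>
      have h1 : ∑ i : Fin (m+1), c i • (⇑ρ)^[(i : ℕ)] γ
          ≤ ∑ i : Fin (m+1), |c i| • (⇑ρ)^[m] γ := by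
        refine Finset.sum_le_sum fun i _ => ?_
        calc c i • (⇑ρ)^[(i : ℕ)] γ
            ≤ |c i| • (⇑ρ)^[(i : ℕ)] γ :=
              zsmul_le_zsmul_left (le_of_lt (hpos _ γ hγ)) (le_abs_self _)
          _ ≤ |c i| • (⇑ρ)^[m] γ :=
              zsmul_le_zsmul_right (abs_nonneg _)
                (hmono _ m (by omega) γ hγ)
      have h2 : ∑ i : Fin (m+1), |c i| • (⇑ρ)^[m] γ
          = (∑ i : Fin (m+1), (c i).natAbs) • (⇑ρ)^[m] γ := by
        rw [← Finset.sum_smul, ← natCast_zsmul]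
        congr 1
        push_cast
        rfl
      have h3 := hcontr (∑ i : Fin (m+1), (c i).natAbs) _ (hpos m γ hγ)
      rw [Function.iterate_succ_apply']
      calc ∑ i : Fin (m+1), c i • (⇑ρ)^[(i : ℕ)] γ
          ≤ _ := h1
        _ = _ := h2
        _ < _ := h3
  intro n a han γ hγ
  rw [Fin.sum_univ_castSucc]
  simp only [Fin.coe_castSucc, Fin.val_last]
  set S := ∑ i : Fin n, a i.castSucc • (⇑ρ)^[((i : Fin n) : ℕ)] γ with hS
  clear_value S
  have hub : S < (⇑ρ)^[n] γ := by
    rw [hS]; simpa using key n (fun i => a i.castSucc) γ hγ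
  have hlb : -(⇑ρ)^[n] γ < S := by
    have := key n (fun i => -a i.castSucc) γ hγ
    simp only [neg_smul] at this
    rw [Finset.sum_neg_distrib, ← hS] at this
    exact neg_lt.mp this
  constructor
  · intro h
    by_contra hle
    push_neg at hle
    have hle' : a (Fin.last n) ≤ -1 := by omega
    have : a (Fin.last n) • (⇑ρ)^[n] γ ≤ (-1 : ℤ) • (⇑ρ)^[n] γ :=
      zsmul_le_zsmul_left (le_of_lt (hpos n γ hγ)) hle'
    simp only [neg_smul, one_zsmul] at this
    have h2 : S + a (Fin.last n) • (⇑ρ)^[n] γ < (⇑ρ)^[n] γ + -(⇑ρ)^[n] γ :=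
      add_lt_add_of_lt_of_le hub this
    rw [add_neg_cancel] at h2
    exact absurd (h.trans h2) (lt_irrefl 0)
  · intro h
    have h1 : (1 : ℤ) ≤ a (Fin.last n) := h
    have : (1 : ℤ) • (⇑ρ)^[n] γ ≤ a (Fin.last n) • (⇑ρ)^[n] γ :=
      zsmul_le_zsmul_left (le_of_lt (hpos n γ hγ)) h1
    simp only [one_zsmul] at this
    have h2 : -(⇑ρ)^[n] γ + (⇑ρ)^[n] γ < S + a (Fin.last n) • (⇑ρ)^[n] γ :=
      add_lt_add_of_lt_of_le hlb this
    rwa [neg_add_cancel] at h2
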